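/- For every real μ > 1 and every integer n ≥ 1, ∫₀^∞ (1 − (1 − μ^{−u})^n) du = H_n / log μ, where H_n = Σ_{j=1}^n 1/j is the n-th harmonic number. -/

import Mathlib

open MeasureTheory Set

lemma aux_integrable (c : ℝ) (hc : 0 < c) (k : ℕ) :
    IntegrableOn (fun u : ℝ => (1 - Real.exp (-(c * u))) ^ k * Real.exp (-(c * u)))
      (Ioi (0:ℝ)) := by
  apply Integrable.mono' (exp_neg_integrableOn_Ioi 0 hc)
  · apply Continuous.aestronglyMeasurable
    continuity
  · filter_upwards [ae_restrict_mem measurableSet_Ioi] with u hu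
    have hu0 : 0 < u := hu
    have h1 : Real.exp (-(c * u)) ≤ 1 := by
      apply Real.exp_le_one_iff.mpr
      nlinarith
    have h0 : 0 < Real.exp (-(c * u)) := Real.exp_pos _
    have hnn : (0:ℝ) ≤ (1 - Real.exp (-(c * u))) ^ k * Real.exp (-(c * u)) :=
      mul_nonneg (pow_nonneg (by linarith) _) h0.le
    rw [Real.norm_eq_abs, abs_of_nonneg hnn, neg_mul]
    nlinarith [pow_le_one₀ (by linarith : (0:ℝ) ≤ 1 - Real.exp (-(c*u))) (by linarith : 1 - Real.exp (-(c*u)) ≤ 1) (n := k), pow_nonneg (by linarith : (0:ℝ) ≤ 1 - Real.exp (-(c*u))) k]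

lemma aux_integral (c : ℝ) (hc : 0 < c) (k : ℕ) :
    ∫ u in Ioi (0:ℝ), (1 - Real.exp (-(c * u))) ^ k * Real.exp (-(c * u)) =
      1 / ((k + 1) * c) := by
  have hk1 : (0:ℝ) < (k:ℝ) + 1 := by positivity
  have hderiv : ∀ u ∈ Ioi (0:ℝ), HasDerivAt
      (fun u : ℝ => (1 - Real.exp (-(c * u))) ^ (k + 1) / ((k + 1) * c))
      ((1 - Real.exp (-(c * u))) ^ k * Real.exp (-(c * u))) u := by
    intro u _
    have h1 : HasDerivAt (fun u : ℝ => -(c * u)) (-c) u := by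
      have := ((hasDerivAt_id u).const_mul c).neg; simp only [mul_one] at this; exact this
    have h2 : HasDerivAt (fun u : ℝ => 1 - Real.exp (-(c * u)))
        (c * Real.exp (-(c * u))) u := by
      have := (Real.hasDerivAt_exp (-(c * u))).comp u h1
      have h3 := ((hasDerivAt_const u (1:ℝ)).sub this)
      refine h3.congr_deriv ?_
      ring
    have h4 := (h2.pow (k + 1)).div_const ((k + 1) * c)
    refine h4.congr_deriv ?_
    simp only [Nat.add_sub_cancel, Nat.cast_add, Nat.cast_one]
    field_simp
  have htend : Filter.Tendsto
      (fun u : ℝ => (1 - Real.exp (-(c * u))) ^ (k + 1) / ((k + 1) * c))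
      Filter.atTop (nhds (1 / ((k + 1) * c))) := by
    have h0 : Filter.Tendsto (fun u : ℝ => Real.exp (-(c * u))) Filter.atTop (nhds 0) := by
      have hcu : Filter.Tendsto (fun u : ℝ => c * u) Filter.atTop Filter.atTop :=
        Filter.Tendsto.const_mul_atTop hc Filter.tendsto_id
      exact Real.tendsto_exp_atBot.comp (Filter.tendsto_neg_atTop_atBot.comp hcu)
    have : Filter.Tendsto (fun u : ℝ => (1 - Real.exp (-(c * u))) ^ (k + 1))
        Filter.atTop (nhds 1) := by
      have := ((tendsto_const_nhds (x := (1:ℝ))).sub h0).pow (k + 1)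
      simpa using this
    simpa using this.div_const ((k + 1) * c)
  have := integral_Ioi_of_hasDerivAt_of_tendsto
    (f := fun u : ℝ => (1 - Real.exp (-(c * u))) ^ (k + 1) / ((k + 1) * c))
    (by
      apply Continuous.continuousWithinAt
      continuity)
    hderiv (aux_integrable c hc k) htend
  rw [this]
  simp

theorem stmt_10 (μ : ℝ) (hμ : 1 < μ) (n : ℕ) (hn : 1 ≤ n) :
    ∫ u in Ioi (0:ℝ), (1 - (1 - μ ^ (-u)) ^ n) =
      (∑ j ∈ Finset.range n, (1 : ℝ) / (j + 1)) / Real.log μ := by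
  set c := Real.log μ with hc
  have hc0 : 0 < c := Real.log_pos hμ
  have hμ0 : 0 < μ := by linarith
  have hrw : ∀ u : ℝ, μ ^ (-u) = Real.exp (-(c * u)) := by
    intro u
    rw [Real.rpow_def_of_pos hμ0]
    rw [← hc]
    ring_nf
  have hgeom : ∀ u : ℝ, 1 - (1 - μ ^ (-u)) ^ n =
      ∑ k ∈ Finset.range n, (1 - Real.exp (-(c * u))) ^ k * Real.exp (-(c * u)) := by
    intro u
    rw [hrw u]
    have := geom_sum_mul (1 - Real.exp (-(c * u))) n
    rw [← Finset.sum_mul]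
    set e := Real.exp (-(c * u))
    have h : (1 - e) - 1 = -e := by ring
    nlinarith [this]
  calc ∫ u in Ioi (0:ℝ), (1 - (1 - μ ^ (-u)) ^ n)
      = ∫ u in Ioi (0:ℝ), ∑ k ∈ Finset.range n,
          (1 - Real.exp (-(c * u))) ^ k * Real.exp (-(c * u)) := by
        apply integral_congr_ae
        filter_upwards with u using hgeom u
    _ = ∑ k ∈ Finset.range n, ∫ u in Ioi (0:ℝ),
          (1 - Real.exp (-(c * u))) ^ k * Real.exp (-(c * u)) :=
        integral_finset_sum _ (fun k _ => aux_integrable c hc0 k)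
    _ = ∑ k ∈ Finset.range n, 1 / ((k + 1) * c) := by
        exact Finset.sum_congr rfl (fun k _ => aux_integral c hc0 k)
    _ = (∑ j ∈ Finset.range n, (1 : ℝ) / (j + 1)) / c := by
        rw [Finset.sum_div]
        apply Finset.sum_congr rfl
        intro k _
        rw [div_div]
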